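/- Let G be a graph and H an attachment set. Then for every n ≥ 1, η(altanⁿ(G,H)) = η(altan(G,H)), i.e., all iterated altans have the same nullity as the first altan. -/

import Mathlib

open scoped Classical

/-- The nullity of a graph: dimension of the kernel of its real adjacency matrix. -/
noncomputable def nullity {V : Type*} [Fintype V] (G : SimpleGraph V) : ℕ :=
  letI := Classical.decEq V
  letI := Classical.decRel G.Adj
  Module.finrank ℝ ↥(LinearMap.ker (Matrix.toLin' (G.adjMatrix ℝ)))

/-- `q` is a kernel eigenvector of `G`: the sum of `q` over each neighbourhood is `0`. -/
def IsKernelVector {V : Type*} [Fintype V] (G : SimpleGraph V) (q : V → ℝ) : Prop :=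
  ∀ v : V, ∑ u : V, (if G.Adj v u then q u else 0) = 0

/-- Underlying relation of the altan construction: vertices are `V ⊕ (Fin h ⊕ Fin h)`,
where `Sum.inr (Sum.inl i)` is `x_{i+1}` and `Sum.inr (Sum.inr i)` is `y_{i+1}`
(0-indexed versions of the 1-indexed `x_i, y_i`). -/
def altanRel {V : Type*} {h : ℕ} [NeZero h] (G : SimpleGraph V) (H : Fin h → V) :
    (V ⊕ (Fin h ⊕ Fin h)) → (V ⊕ (Fin h ⊕ Fin h)) → Prop
  | Sum.inl u, Sum.inl w => G.Adj u w
  | Sum.inl u, Sum.inr (Sum.inl i) => u = H i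
  | Sum.inr (Sum.inl i), Sum.inr (Sum.inr j) => j = i ∨ i = j + 1
  | _, _ => False

/-- The altan of `(G, H)`. -/
def altan {V : Type*} {h : ℕ} [NeZero h] (G : SimpleGraph V) (H : Fin h → V) :
    SimpleGraph (V ⊕ (Fin h ⊕ Fin h)) :=
  SimpleGraph.fromRel (altanRel G H)

/-- The special vector: `s(y_i) = (-1)^i` (1-indexed), `0` elsewhere. -/
def specialVector (V : Type*) (h : ℕ) : (V ⊕ (Fin h ⊕ Fin h)) → ℝ
  | Sum.inr (Sum.inr j) => (-1 : ℝ) ^ ((j : ℕ) + 1)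
  | _ => 0

/-- The induced attachment set `H' = (y_1, ..., y_h)` of the altan. -/
def inducedAttachment (V : Type*) (h : ℕ) : Fin h → (V ⊕ (Fin h ⊕ Fin h)) :=
  fun i => Sum.inr (Sum.inr i)

/-- A graph together with an attachment set, closed under the altan construction. -/
structure AltanPair where
  V : Type
  [fV : Fintype V]
  G : SimpleGraph V
  h : ℕ
  h2 : 2 ≤ h
  H : Fin h → V

attribute [instance] AltanPair.fV

/-- One altan step: pass to the altan with the induced attachment set. -/
def altanStep (P : AltanPair) : AltanPair :=
  haveI : NeZero P.h := ⟨by have := P.h2; omega⟩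
  { V := P.V ⊕ (Fin P.h ⊕ Fin P.h)
    G := altan P.G P.H
    h := P.h
    h2 := P.h2
    H := inducedAttachment P.V P.h }

/-- Nullity of the graph of an altan pair. -/
noncomputable def AltanPair.nullity (P : AltanPair) : ℕ := _root_.nullity P.G

-- ===== auxiliary development =====
namespace AltanAux

open Sum Finset

/-- the kernel of the adjacency matrix, as a bundled submodule -/
noncomputable def kerSub {V : Type*} [Fintype V] (G : SimpleGraph V) :
    Submodule ℝ (V → ℝ) :=
  letI := Classical.decEq V
  letI := Classical.decRel G.Adj
  LinearMap.ker (Matrix.toLin' (G.adjMatrix ℝ))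

lemma nullity_eq {V : Type*} [Fintype V] (G : SimpleGraph V) :
    nullity G = Module.finrank ℝ (kerSub G) := rfl

lemma mem_kerSub {V : Type*} [Fintype V] {G : SimpleGraph V} {q : V → ℝ} :
    q ∈ kerSub G ↔ IsKernelVector G q := by
  letI := Classical.decEq V
  letI := Classical.decRel G.Adj
  simp only [kerSub, LinearMap.mem_ker, Matrix.toLin'_apply]
  rw [funext_iff]
  unfold IsKernelVector
  refine forall_congr' fun v => ?_
  simp [Matrix.mulVec, dotProduct, SimpleGraph.adjMatrix_apply, ite_mul]

section FinLemmas

variable {h : ℕ} [NeZero h]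

lemma fin_one_ne_zero (hh : 2 ≤ h) : (1 : Fin h) ≠ 0 := by
  simp [Fin.one_eq_zero_iff]
  omega

lemma ne_add_one (hh : 2 ≤ h) (j : Fin h) : j ≠ j + 1 := by
  intro e
  have : (0 : Fin h) = 1 := by
    have := add_left_cancel (a := j) (b := 0) (c := 1) (by simpa using e)
    exact this
  exact (fin_one_ne_zero hh) this.symm

lemma ne_sub_one (hh : 2 ≤ h) (i : Fin h) : i ≠ i - 1 := by
  intro e
  have : i - 1 = i := e.symm
  rw [sub_eq_self] at this
  exact (fin_one_ne_zero hh) this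

lemma val_add_one (hh : 2 ≤ h) (j : Fin h) :
    ((j + 1 : Fin h) : ℕ) = if (j : ℕ) + 1 = h then 0 else (j : ℕ) + 1 := by
  have h1 : ((1 : Fin h) : ℕ) = 1 := by
    rw [Fin.val_one']
    exact Nat.mod_eq_of_lt (by omega)
  rw [Fin.val_add, h1]
  by_cases e : (j : ℕ) + 1 = h
  · simp [e, Nat.mod_self]
  · have : (j : ℕ) + 1 < h := lt_of_le_of_ne (j.isLt) e
    simp [e, Nat.mod_eq_of_lt this]

/-- for even h, (-1)^(j+1) = -(-1)^j as Fin h exponents -/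
lemma eps_succ (hh : 2 ≤ h) (he : Even h) (j : Fin h) :
    ((-1 : ℝ)) ^ (((j + 1 : Fin h)) : ℕ) = -((-1 : ℝ) ^ ((j : ℕ))) := by
  rw [val_add_one hh]
  by_cases e : (j : ℕ) + 1 = h
  · have hj : (j : ℕ) = h - 1 := by omega
    have hodd : Odd (h - 1) := Nat.Even.sub_odd (by omega) he odd_one
    rw [if_pos e, hj, hodd.neg_one_pow]
    norm_num
  · simp [e, pow_succ]

lemma eps_pred (hh : 2 ≤ h) (he : Even h) (j : Fin h) :
    ((-1 : ℝ)) ^ ((j : Fin h) : ℕ) = -((-1 : ℝ) ^ (((j - 1 : Fin h)) : ℕ)) := by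
  have := eps_succ hh he (j - 1)
  rwa [sub_add_cancel] at this

open Fin.NatCast in
lemma alt_of_step {f : Fin h → ℝ} (hf : ∀ j, f j + f (j + 1) = 0) (j : Fin h) :
    f j = (-1 : ℝ) ^ ((j : ℕ)) * f 0 := by
  have key : ∀ n : ℕ, f (n : Fin h) = (-1 : ℝ) ^ n * f 0 := by
    intro n
    induction n with
    | zero => simp
    | succ k ih =>
      have hk := hf ((k : ℕ) : Fin h)
      have : ((k + 1 : ℕ) : Fin h) = ((k : ℕ) : Fin h) + 1 := by push_cast; ring
      rw [this]
      have : f (((k : ℕ) : Fin h) + 1) = -f ((k : ℕ) : Fin h) := by linarith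
      rw [this, ih, pow_succ]
      ring
  have := key (j : ℕ)
  rwa [Fin.cast_val_eq_self] at this

open Fin.NatCast in
lemma alt_of_step_odd (hodd : Odd h) {f : Fin h → ℝ} (hf : ∀ j, f j + f (j + 1) = 0)
    (j : Fin h) : f j = 0 := by
  have h0 : f 0 = 0 := by
    have key : ∀ n : ℕ, f (n : Fin h) = (-1 : ℝ) ^ n * f 0 := by
      intro n
      induction n with
      | zero => simp
      | succ k ih =>
        have hk := hf ((k : ℕ) : Fin h)
        have e : ((k + 1 : ℕ) : Fin h) = ((k : ℕ) : Fin h) + 1 := by push_cast; ring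
        rw [e]
        have : f (((k : ℕ) : Fin h) + 1) = -f ((k : ℕ) : Fin h) := by linarith
        rw [this, ih, pow_succ]; ring
    have hh := key h
    rw [Fin.natCast_self, hodd.neg_one_pow] at hh
    linarith
  rw [alt_of_step hf j, h0, mul_zero]

lemma sum_shift (f : Fin h → ℝ) : ∑ j : Fin h, f (j + 1) = ∑ j : Fin h, f j :=
  Fintype.sum_equiv (Equiv.addRight (1 : Fin h)) _ _ (fun _ => rfl)

lemma sum_shift' (f : Fin h → ℝ) : ∑ j : Fin h, f (j - 1) = ∑ j : Fin h, f j :=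
  Fintype.sum_equiv (Equiv.subRight (1 : Fin h)) _ _ (fun _ => rfl)

end FinLemmas

lemma sum_ite_or {α : Type*} [Fintype α] {a b : α} (hab : a ≠ b) (f : α → ℝ)
    {D : DecidablePred fun j : α => j = a ∨ j = b} :
    ∑ j : α, (if j = a ∨ j = b then f j else 0) = f a + f b := by
  classical
  have step : ∀ j : α, (if j = a ∨ j = b then f j else 0)
      = (if j = a then f j else 0) + (if j = b then f j else 0) := by
    intro j
    by_cases h1 : j = a <;> by_cases h2 : j = b <;> simp_all
  simp_rw [step]
  rw [Finset.sum_add_distrib]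
  simp [Finset.sum_ite_eq']


section Adjacency

variable {W : Type*} {h : ℕ} [NeZero h] (A : SimpleGraph W) (K : Fin h → W)

lemma altan_adj_inl_inl {u w : W} :
    (altan A K).Adj (Sum.inl u) (Sum.inl w) ↔ A.Adj u w := by
  rw [altan, SimpleGraph.fromRel_adj]
  constructor
  · rintro ⟨-, hA | hA⟩
    · exact hA
    · exact hA.symm
  · intro hA
    exact ⟨by simp [hA.ne], Or.inl hA⟩

lemma altan_adj_inl_x {u : W} {i : Fin h} :
    (altan A K).Adj (Sum.inl u) (Sum.inr (Sum.inl i)) ↔ u = K i := by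
  rw [altan, SimpleGraph.fromRel_adj]
  constructor
  · rintro ⟨-, hA | hA⟩
    · exact hA
    · exact hA.elim
  · intro hA
    exact ⟨by simp, Or.inl hA⟩

lemma altan_adj_x_inl {u : W} {i : Fin h} :
    (altan A K).Adj (Sum.inr (Sum.inl i)) (Sum.inl u) ↔ u = K i := by
  rw [SimpleGraph.adj_comm]; exact altan_adj_inl_x A K

lemma altan_adj_inl_y {u : W} {j : Fin h} :
    ¬ (altan A K).Adj (Sum.inl u) (Sum.inr (Sum.inr j)) := by
  rw [altan, SimpleGraph.fromRel_adj]
  rintro ⟨-, hA | hA⟩ <;> exact hA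

lemma altan_adj_y_inl {u : W} {j : Fin h} :
    ¬ (altan A K).Adj (Sum.inr (Sum.inr j)) (Sum.inl u) := by
  rw [SimpleGraph.adj_comm]; exact altan_adj_inl_y A K

lemma altan_adj_x_x {i j : Fin h} :
    ¬ (altan A K).Adj (Sum.inr (Sum.inl i)) (Sum.inr (Sum.inl j)) := by
  rw [altan, SimpleGraph.fromRel_adj]
  rintro ⟨-, hA | hA⟩ <;> exact hA

lemma altan_adj_y_y {i j : Fin h} :
    ¬ (altan A K).Adj (Sum.inr (Sum.inr i)) (Sum.inr (Sum.inr j)) := by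
  rw [altan, SimpleGraph.fromRel_adj]
  rintro ⟨-, hA | hA⟩ <;> exact hA

lemma altan_adj_x_y {i j : Fin h} :
    (altan A K).Adj (Sum.inr (Sum.inl i)) (Sum.inr (Sum.inr j)) ↔ (j = i ∨ i = j + 1) := by
  rw [altan, SimpleGraph.fromRel_adj]
  constructor
  · rintro ⟨-, hA | hA⟩
    · exact hA
    · exact hA.elim
  · rintro hA
    refine ⟨by simp, Or.inl hA⟩

lemma altan_adj_y_x {i j : Fin h} :
    (altan A K).Adj (Sum.inr (Sum.inr j)) (Sum.inr (Sum.inl i)) ↔ (j = i ∨ i = j + 1) := by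
  rw [SimpleGraph.adj_comm]; exact altan_adj_x_y A K

end Adjacency

section SumAt

variable {W : Type*} [Fintype W] {h : ℕ} [NeZero h] (A : SimpleGraph W) (K : Fin h → W)
  (q : (W ⊕ (Fin h ⊕ Fin h)) → ℝ)

lemma sum_at_inl (w : W) :
    ∑ u, (if (altan A K).Adj (Sum.inl w) u then q u else 0)
      = (∑ u, if A.Adj w u then q (Sum.inl u) else 0)
        + ∑ i, (if w = K i then q (Sum.inr (Sum.inl i)) else 0) := by
  rw [Fintype.sum_sum_type, Fintype.sum_sum_type]
  simp_rw [altan_adj_inl_inl, altan_adj_inl_x, altan_adj_inl_y]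
  simp

lemma sum_at_x (hh : 2 ≤ h) (i : Fin h) :
    ∑ u, (if (altan A K).Adj (Sum.inr (Sum.inl i)) u then q u else 0)
      = q (Sum.inl (K i)) + (q (Sum.inr (Sum.inr i)) + q (Sum.inr (Sum.inr (i - 1)))) := by
  rw [Fintype.sum_sum_type, Fintype.sum_sum_type]
  simp_rw [altan_adj_x_inl, altan_adj_x_x, altan_adj_x_y]
  have cond : ∀ j : Fin h, (j = i ∨ i = j + 1) ↔ (j = i ∨ j = i - 1) := by
    intro j
    apply or_congr Iff.rfl
    rw [eq_sub_iff_add_eq, eq_comm]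
  simp_rw [cond]
  rw [sum_ite_or (a := i) (b := i - 1) (ne_sub_one hh i) (fun j => q (Sum.inr (Sum.inr j)))]
  simp [Finset.sum_ite_eq']

lemma sum_at_y (hh : 2 ≤ h) (j : Fin h) :
    ∑ u, (if (altan A K).Adj (Sum.inr (Sum.inr j)) u then q u else 0)
      = q (Sum.inr (Sum.inl j)) + q (Sum.inr (Sum.inl (j + 1))) := by
  rw [Fintype.sum_sum_type, Fintype.sum_sum_type]
  have h1 : ∀ u : W, ¬ (altan A K).Adj (Sum.inr (Sum.inr j)) (Sum.inl u) :=
    fun u => altan_adj_y_inl A K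
  simp_rw [altan_adj_y_x, altan_adj_y_y]
  have cond : ∀ i : Fin h, (j = i ∨ i = j + 1) ↔ (i = j ∨ i = j + 1) := by
    intro i
    apply or_congr _ Iff.rfl
    exact eq_comm
  simp_rw [cond]
  rw [sum_ite_or (a := j) (b := j + 1) (ne_add_one hh j) (fun i => q (Sum.inr (Sum.inl i)))]
  simp [h1]

lemma isKernelVector_altan_iff (hh : 2 ≤ h) :
    IsKernelVector (altan A K) q ↔
      ((∀ w : W, (∑ u, if A.Adj w u then q (Sum.inl u) else 0)
          + (∑ i, if w = K i then q (Sum.inr (Sum.inl i)) else 0) = 0)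
       ∧ (∀ i : Fin h, q (Sum.inl (K i))
          + (q (Sum.inr (Sum.inr i)) + q (Sum.inr (Sum.inr (i - 1)))) = 0)
       ∧ (∀ j : Fin h, q (Sum.inr (Sum.inl j)) + q (Sum.inr (Sum.inl (j + 1))) = 0)) := by
  constructor
  · intro hq
    refine ⟨fun w => ?_, fun i => ?_, fun j => ?_⟩
    · have := hq (Sum.inl w); rwa [sum_at_inl] at this
    · have := hq (Sum.inr (Sum.inl i)); rwa [sum_at_x A K q hh] at this
    · have := hq (Sum.inr (Sum.inr j)); rwa [sum_at_y A K q hh] at this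
  · rintro ⟨h1, h2, h3⟩ v
    match v with
    | Sum.inl w => rw [sum_at_inl]; exact h1 w
    | Sum.inr (Sum.inl i) => rw [sum_at_x A K q hh]; exact h2 i
    | Sum.inr (Sum.inr j) => rw [sum_at_y A K q hh]; exact h3 j

end SumAt


section Solve

variable {h : ℕ} [NeZero h]

lemma eps_sq (j : Fin h) : (-1 : ℝ) ^ ((j : ℕ)) * (-1 : ℝ) ^ ((j : ℕ)) = 1 := by
  rw [← pow_add]
  exact Even.neg_one_pow ⟨(j : ℕ), rfl⟩

open Fin.NatCast in
lemma exists_step_solution (hh : 2 ≤ h) (c : Fin h → ℝ)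
    (hc : Odd h ∨ ∑ j : Fin h, (-1 : ℝ) ^ ((j : ℕ)) * c j = 0) :
    ∃ g : Fin h → ℝ, ∀ j, g j + g (j + 1) = c j := by
  set S : ℕ → ℝ := fun n => ∑ k ∈ Finset.range n, (-1 : ℝ) ^ k * c ((k : ℕ) : Fin h) with hS
  have hS0 : S 0 = 0 := by simp [hS]
  have hSucc : ∀ n : ℕ, S (n + 1) = S n + (-1 : ℝ) ^ n * c ((n : ℕ) : Fin h) := by
    intro n
    simp only [hS]
    rw [Finset.sum_range_succ]
  set t : ℝ := if Odd h then (c (((h - 1 : ℕ)) : Fin h) + S (h - 1)) / 2 else 0 with ht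
  refine ⟨fun j => (-1 : ℝ) ^ ((j : ℕ)) * (t - S (j : ℕ)), fun j => ?_⟩
  show (-1 : ℝ) ^ ((j : ℕ)) * (t - S (j : ℕ))
      + (-1 : ℝ) ^ (((j + 1 : Fin h)) : ℕ) * (t - S (((j + 1 : Fin h)) : ℕ)) = c j
  have hval := val_add_one hh j
  by_cases e : (j : ℕ) + 1 = h
  · -- wrap-around step
    rw [hval, if_pos e]
    have hm : (j : ℕ) = h - 1 := by omega
    have hcj : (((h - 1 : ℕ)) : Fin h) = j := by rw [← hm, Fin.cast_val_eq_self]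
    rcases Nat.even_or_odd h with he | ho
    · -- h even
      have hc' : ∑ j : Fin h, (-1 : ℝ) ^ ((j : ℕ)) * c j = 0 := by
        rcases hc with ho' | h0
        · exact absurd ho' (by simp [Nat.not_odd_iff_even.mpr he])
        · exact h0
      have hSh : S h = 0 := by
        simp only [hS]
        rw [← Fin.sum_univ_eq_sum_range (fun k => (-1 : ℝ) ^ k * c ((k : ℕ) : Fin h)) h]
        rw [← hc']
        exact Finset.sum_congr rfl (fun j _ => by rw [Fin.cast_val_eq_self])
      have hsplit : S h = S (h - 1) + (-1 : ℝ) ^ (h - 1) * c (((h - 1 : ℕ)) : Fin h) := by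
        conv_lhs => rw [show h = (h - 1) + 1 by omega]
        exact hSucc (h - 1)
      have hodd1 : Odd (h - 1) := Nat.Even.sub_odd (by omega) he odd_one
      have hpow : (-1 : ℝ) ^ (h - 1) = -1 := hodd1.neg_one_pow
      have hSc : S (h - 1) = c j := by
        rw [hsplit, hpow, hcj] at hSh
        linarith
      have htz : t = 0 := by rw [ht, if_neg (by simp [Nat.not_odd_iff_even.mpr he])]
      rw [hm, htz, hpow, hS0, hSc]
      ring
    · -- h odd
      have heven1 : Even (h - 1) := Nat.Odd.sub_odd ho odd_one
      have hpow : (-1 : ℝ) ^ (h - 1) = 1 := heven1.neg_one_pow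
      have htv : t = (c (((h - 1 : ℕ)) : Fin h) + S (h - 1)) / 2 := by rw [ht, if_pos ho]
      rw [hm, hpow, htv, hcj, hS0]
      ring
  · -- ordinary step
    rw [hval, if_neg e]
    rw [hSucc (j : ℕ), Fin.cast_val_eq_self, pow_succ]
    have hP := eps_sq j
    linear_combination c j * hP

lemma sum_const_fin (x : ℝ) : ∑ _j : Fin h, x = (h : ℝ) * x := by
  rw [Finset.sum_const, Finset.card_univ, Fintype.card_fin, nsmul_eq_mul]

end Solve


section Main

variable {V : Type*} [Fintype V] {h : ℕ} [NeZero h] (G : SimpleGraph V) (H : Fin h → V)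

lemma memB_iff (hh : 2 ≤ h) {q : ((V ⊕ (Fin h ⊕ Fin h)) ⊕ (Fin h ⊕ Fin h)) → ℝ} :
    q ∈ kerSub (altan (altan G H) (inducedAttachment V h)) ↔
      ((∀ w : V ⊕ (Fin h ⊕ Fin h),
          (∑ u, if (altan G H).Adj w u then q (Sum.inl u) else 0)
          + (∑ i : Fin h, if w = inducedAttachment V h i then q (Sum.inr (Sum.inl i)) else 0) = 0)
       ∧ (∀ i : Fin h, q (Sum.inl (inducedAttachment V h i))
          + (q (Sum.inr (Sum.inr i)) + q (Sum.inr (Sum.inr (i - 1)))) = 0)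
       ∧ (∀ j : Fin h, q (Sum.inr (Sum.inl j)) + q (Sum.inr (Sum.inl (j + 1))) = 0)) := by
  rw [mem_kerSub, isKernelVector_altan_iff _ _ _ hh]
  congr!

lemma xprime_zero (hh : 2 ≤ h)
    {q : ((V ⊕ (Fin h ⊕ Fin h)) ⊕ (Fin h ⊕ Fin h)) → ℝ}
    (hq : q ∈ kerSub (altan (altan G H) (inducedAttachment V h))) (j : Fin h) :
    q (Sum.inr (Sum.inl j)) = 0 := by
  obtain ⟨c1, c2, c3⟩ := (memB_iff G H hh).mp hq
  rcases Nat.even_or_odd h with he | ho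
  · -- even case
    have E1 : ∀ k : Fin h,
        (q (Sum.inl (Sum.inr (Sum.inl k))) + q (Sum.inl (Sum.inr (Sum.inl (k + 1)))))
          + q (Sum.inr (Sum.inl k)) = 0 := by
      intro k
      have hc1 := c1 (Sum.inr (Sum.inr k))
      have e1 := sum_at_y G H (fun u => q (Sum.inl u)) hh k
      rw [e1] at hc1
      have e2 : (∑ i : Fin h, if (Sum.inr (Sum.inr k) : V ⊕ (Fin h ⊕ Fin h))
          = inducedAttachment V h i then q (Sum.inr (Sum.inl i)) else 0)
          = q (Sum.inr (Sum.inl k)) := by simp [inducedAttachment]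
      rw [e2] at hc1
      linarith
    have hFalt : ∀ k : Fin h, q (Sum.inr (Sum.inl k))
        = (-1 : ℝ) ^ ((k : ℕ)) * q (Sum.inr (Sum.inl (0 : Fin h))) :=
      fun k => alt_of_step (f := fun j => q (Sum.inr (Sum.inl j))) c3 k
    have T0 : ∑ k : Fin h, (-1 : ℝ) ^ ((k : ℕ)) *
        ((q (Sum.inl (Sum.inr (Sum.inl k))) + q (Sum.inl (Sum.inr (Sum.inl (k + 1)))))
          + q (Sum.inr (Sum.inl k))) = 0 :=
      Finset.sum_eq_zero (fun k _ => by rw [E1 k, mul_zero])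
    have Texp : ∑ k : Fin h, (-1 : ℝ) ^ ((k : ℕ)) *
        ((q (Sum.inl (Sum.inr (Sum.inl k))) + q (Sum.inl (Sum.inr (Sum.inl (k + 1)))))
          + q (Sum.inr (Sum.inl k)))
        = ((∑ k : Fin h, (-1 : ℝ) ^ ((k : ℕ)) * q (Sum.inl (Sum.inr (Sum.inl k))))
          + (∑ k : Fin h, (-1 : ℝ) ^ ((k : ℕ)) * q (Sum.inl (Sum.inr (Sum.inl (k + 1))))))
          + ∑ k : Fin h, (-1 : ℝ) ^ ((k : ℕ)) * q (Sum.inr (Sum.inl k)) := by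
      rw [← Finset.sum_add_distrib, ← Finset.sum_add_distrib]
      exact Finset.sum_congr rfl (fun k _ => by ring)
    have Tsh : ∑ k : Fin h, (-1 : ℝ) ^ ((k : ℕ)) * q (Sum.inl (Sum.inr (Sum.inl (k + 1))))
        = - ∑ k : Fin h, (-1 : ℝ) ^ ((k : ℕ)) * q (Sum.inl (Sum.inr (Sum.inl k))) := by
      have e3 : ∑ k : Fin h, (-1 : ℝ) ^ ((k : ℕ)) * q (Sum.inl (Sum.inr (Sum.inl (k + 1))))
          = ∑ k : Fin h, -((-1 : ℝ) ^ (((k + 1 : Fin h)) : ℕ) * q (Sum.inl (Sum.inr (Sum.inl (k + 1))))) :=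
        Finset.sum_congr rfl (fun k _ => by rw [eps_succ hh he]; ring)
      have e4 : ∑ k : Fin h, -((-1 : ℝ) ^ (((k + 1 : Fin h)) : ℕ) * q (Sum.inl (Sum.inr (Sum.inl (k + 1)))))
          = ∑ k : Fin h, -((-1 : ℝ) ^ ((k : ℕ)) * q (Sum.inl (Sum.inr (Sum.inl k)))) :=
        Fintype.sum_equiv (Equiv.addRight (1 : Fin h)) _ _ (fun k => rfl)
      rw [e3, e4]
      simp
    have TF : ∑ k : Fin h, (-1 : ℝ) ^ ((k : ℕ)) * q (Sum.inr (Sum.inl k))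
        = (h : ℝ) * q (Sum.inr (Sum.inl (0 : Fin h))) := by
      have TFterm : ∀ k : Fin h, (-1 : ℝ) ^ ((k : ℕ)) * q (Sum.inr (Sum.inl k))
          = q (Sum.inr (Sum.inl (0 : Fin h))) := fun k => by
        rw [hFalt k, ← mul_assoc, eps_sq, one_mul]
      rw [Finset.sum_congr rfl (fun k _ => TFterm k)]
      exact sum_const_fin _
    rw [Texp, Tsh, TF] at T0
    have hne : (h : ℝ) ≠ 0 := Nat.cast_ne_zero.mpr (by omega)
    have hF0 : q (Sum.inr (Sum.inl (0 : Fin h))) = 0 := by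
      have hmul : (h : ℝ) * q (Sum.inr (Sum.inl (0 : Fin h))) = 0 := by linarith
      exact (mul_eq_zero.mp hmul).resolve_left hne
    rw [hFalt j, hF0, mul_zero]
  · -- odd case
    exact alt_of_step_odd ho (f := fun j => q (Sum.inr (Sum.inl j))) c3 j

lemma restrict_mem (hh : 2 ≤ h)
    {q : ((V ⊕ (Fin h ⊕ Fin h)) ⊕ (Fin h ⊕ Fin h)) → ℝ}
    (hq : q ∈ kerSub (altan (altan G H) (inducedAttachment V h))) :
    (fun w => q (Sum.inl w)) ∈ kerSub (altan G H) := by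
  obtain ⟨c1, c2, c3⟩ := (memB_iff G H hh).mp hq
  rw [mem_kerSub]
  intro w
  show ∑ u, (if (altan G H).Adj w u then q (Sum.inl u) else 0) = 0
  have hc1 := c1 w
  have e2 : (∑ i : Fin h, if w = inducedAttachment V h i then q (Sum.inr (Sum.inl i)) else 0) = 0 :=
    Finset.sum_eq_zero (fun i _ => by rw [xprime_zero G H hh hq i]; simp)
  rw [e2] at hc1
  linarith

lemma special_mem (hh : 2 ≤ h) (he : Even h) :
    specialVector V h ∈ kerSub (altan G H) := by
  rw [mem_kerSub, isKernelVector_altan_iff _ _ _ hh]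
  refine ⟨fun v => ?_, fun i => ?_, fun j => ?_⟩
  · have z1 : ∀ u : V, specialVector V h (Sum.inl u) = 0 := fun u => rfl
    have z2 : ∀ i : Fin h, specialVector V h (Sum.inr (Sum.inl i)) = 0 := fun i => rfl
    simp [z1, z2]
  · have z1 : specialVector V h (Sum.inl (H i)) = 0 := rfl
    have z2 : specialVector V h (Sum.inr (Sum.inr i)) = (-1 : ℝ) ^ ((i : ℕ) + 1) := rfl
    have z3 : specialVector V h (Sum.inr (Sum.inr (i - 1))) = (-1 : ℝ) ^ (((i - 1 : Fin h) : ℕ) + 1) := rfl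
    rw [z1, z2, z3, pow_succ, pow_succ]
    have hp := eps_pred hh he i
    linarith [hp]
  · show (0 : ℝ) + 0 = 0
    simp

lemma alt_sum_y_zero (hh : 2 ≤ h) (he : Even h)
    {q : ((V ⊕ (Fin h ⊕ Fin h)) ⊕ (Fin h ⊕ Fin h)) → ℝ}
    (hq : q ∈ kerSub (altan (altan G H) (inducedAttachment V h))) :
    ∑ j : Fin h, (-1 : ℝ) ^ ((j : ℕ)) * q (Sum.inl (Sum.inr (Sum.inr j))) = 0 := by
  obtain ⟨c1, c2, c3⟩ := (memB_iff G H hh).mp hq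
  simp only [inducedAttachment] at c2
  have e1 : ∑ j : Fin h, (-1 : ℝ) ^ ((j : ℕ)) * q (Sum.inl (Sum.inr (Sum.inr j)))
      = ∑ j : Fin h, (-1 : ℝ) ^ ((j : ℕ))
          * (-(q (Sum.inr (Sum.inr j)) + q (Sum.inr (Sum.inr (j - 1))))) :=
    Finset.sum_congr rfl (fun j _ => by
      have := c2 j
      have hv : q (Sum.inl (Sum.inr (Sum.inr j)))
          = -(q (Sum.inr (Sum.inr j)) + q (Sum.inr (Sum.inr (j - 1)))) := by linarith
      rw [hv])
  rw [e1]
  have e2 : ∀ j : Fin h, (-1 : ℝ) ^ ((j : ℕ))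
        * (-(q (Sum.inr (Sum.inr j)) + q (Sum.inr (Sum.inr (j - 1)))))
      = -((-1 : ℝ) ^ ((j : ℕ)) * q (Sum.inr (Sum.inr j)))
        + (-1 : ℝ) ^ (((j - 1 : Fin h)) : ℕ) * q (Sum.inr (Sum.inr (j - 1))) := by
    intro j
    have hp := eps_pred hh he j
    linear_combination (-(q (Sum.inr (Sum.inr (j - 1))))) * hp
  rw [Finset.sum_congr rfl (fun j _ => e2 j), Finset.sum_add_distrib]
  have e4 : ∑ j : Fin h, (-1 : ℝ) ^ (((j - 1 : Fin h)) : ℕ) * q (Sum.inr (Sum.inr (j - 1)))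
      = ∑ j : Fin h, (-1 : ℝ) ^ ((j : ℕ)) * q (Sum.inr (Sum.inr j)) :=
    Fintype.sum_equiv (Equiv.subRight (1 : Fin h)) _ _ (fun j => rfl)
  rw [e4]
  simp

lemma ext_mem (hh : 2 ≤ h) {r : (V ⊕ (Fin h ⊕ Fin h)) → ℝ}
    (hr : r ∈ kerSub (altan G H)) {g : Fin h → ℝ}
    (hg : ∀ j, g j + g (j + 1) = -(r (Sum.inr (Sum.inr (j + 1))))) :
    Sum.elim r (Sum.elim 0 g) ∈ kerSub (altan (altan G H) (inducedAttachment V h)) := by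
  rw [memB_iff G H hh]
  refine ⟨fun w => ?_, fun i => ?_, fun j => ?_⟩
  · have e1 : (∑ u : V ⊕ (Fin h ⊕ Fin h), if (altan G H).Adj w u
        then Sum.elim r (Sum.elim 0 g)
          (Sum.inl u : (V ⊕ (Fin h ⊕ Fin h)) ⊕ (Fin h ⊕ Fin h)) else 0) = 0 := by
      have hw := (mem_kerSub.mp hr) w
      simp only [Sum.elim_inl]
      exact hw
    have e2 : (∑ i : Fin h, if w = inducedAttachment V h i
        then Sum.elim r (Sum.elim 0 g)
          (Sum.inr (Sum.inl i) : (V ⊕ (Fin h ⊕ Fin h)) ⊕ (Fin h ⊕ Fin h)) else 0) = 0 :=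
      Finset.sum_eq_zero (fun i _ => by simp)
    rw [e1, e2]
    norm_num
  · simp only [inducedAttachment, Sum.elim_inl, Sum.elim_inr]
    have hgi := hg (i - 1)
    rw [sub_add_cancel] at hgi
    linarith
  · simp only [Sum.elim_inr, Sum.elim_inl, Pi.zero_apply]
    norm_num

lemma sv_y (j : Fin h) :
    specialVector V h (Sum.inr (Sum.inr j)) = (-1 : ℝ) ^ ((j : ℕ) + 1) := rfl

lemma key (hh : 2 ≤ h) :
    nullity (altan (altan G H) (inducedAttachment V h)) = nullity (altan G H) := by
  rw [nullity_eq, nullity_eq]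
  have hne : (h : ℝ) ≠ 0 := Nat.cast_ne_zero.mpr (by omega)
  rcases Nat.even_or_odd h with he | ho
  · -- EVEN CASE
    have hs : specialVector V h ∈ kerSub (altan G H) := special_mem G H hh he
    set μL : (((V ⊕ (Fin h ⊕ Fin h)) ⊕ (Fin h ⊕ Fin h)) → ℝ) →ₗ[ℝ] ℝ :=
      (h : ℝ)⁻¹ • (∑ j : Fin h, ((-1 : ℝ) ^ ((j : ℕ) + 1)) •
        LinearMap.proj (R := ℝ)
          (φ := fun _ : (V ⊕ (Fin h ⊕ Fin h)) ⊕ (Fin h ⊕ Fin h) => ℝ)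
          (Sum.inr (Sum.inr j))) with hμLdef
    have hμL : ∀ f : ((V ⊕ (Fin h ⊕ Fin h)) ⊕ (Fin h ⊕ Fin h)) → ℝ,
        μL f = (h : ℝ)⁻¹ * ∑ j : Fin h, (-1 : ℝ) ^ ((j : ℕ) + 1) * f (Sum.inr (Sum.inr j)) := by
      intro f
      rw [hμLdef]
      simp [LinearMap.sum_apply, LinearMap.proj_apply, smul_eq_mul]
    set Φt : (((V ⊕ (Fin h ⊕ Fin h)) ⊕ (Fin h ⊕ Fin h)) → ℝ) →ₗ[ℝ] ((V ⊕ (Fin h ⊕ Fin h)) → ℝ) :=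
      LinearMap.funLeft ℝ ℝ (Sum.inl : (V ⊕ (Fin h ⊕ Fin h)) → (V ⊕ (Fin h ⊕ Fin h)) ⊕ (Fin h ⊕ Fin h))
        + LinearMap.smulRight μL (specialVector V h) with hΦtdef
    have hΦt : ∀ f : ((V ⊕ (Fin h ⊕ Fin h)) ⊕ (Fin h ⊕ Fin h)) → ℝ,
        Φt f = (fun w => f (Sum.inl w)) + (μL f) • specialVector V h := by
      intro f
      rw [hΦtdef]
      rfl
    have hmem : ∀ q ∈ kerSub (altan (altan G H) (inducedAttachment V h)),
        Φt q ∈ kerSub (altan G H) := by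
      intro q hq
      rw [hΦt]
      exact Submodule.add_mem _ (restrict_mem G H hh hq) (Submodule.smul_mem _ _ hs)
    have hbij : Function.Bijective (Φt.restrict hmem) := by
      constructor
      · rw [injective_iff_map_eq_zero]
        intro q hq0
        have hval : Φt q.1 = 0 := by
          have := congrArg Subtype.val hq0
          exact this
        rw [hΦt] at hval
        have hfun : ∀ w, q.1 (Sum.inl w) + μL q.1 * specialVector V h w = 0 := by
          intro w
          have := congrFun hval w
          simpa using this
        -- show μL q.1 = 0
        have hsum := alt_sum_y_zero G H hh he q.2
        have hys : ∀ j : Fin h, q.1 (Sum.inl (Sum.inr (Sum.inr j)))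
            = -(μL q.1) * (-1 : ℝ) ^ ((j : ℕ) + 1) := by
          intro j
          have := hfun (Sum.inr (Sum.inr j))
          rw [sv_y] at this
          linarith
        have e : ∀ j : Fin h, (-1 : ℝ) ^ ((j : ℕ)) * q.1 (Sum.inl (Sum.inr (Sum.inr j)))
            = μL q.1 := by
          intro j
          rw [hys j, pow_succ]
          linear_combination (μL q.1) * eps_sq j
        have hμmul : (h : ℝ) * μL q.1 = 0 := by
          calc (h : ℝ) * μL q.1 = ∑ _j : Fin h, μL q.1 := (sum_const_fin _).symm
            _ = ∑ j : Fin h, (-1 : ℝ) ^ ((j : ℕ)) * q.1 (Sum.inl (Sum.inr (Sum.inr j))) :=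
                Finset.sum_congr rfl (fun j _ => (e j).symm)
            _ = 0 := hsum
        have hμv : μL q.1 = 0 := (mul_eq_zero.mp hμmul).resolve_left hne
        have hinlzero : ∀ w, q.1 (Sum.inl w) = 0 := by
          intro w
          have := hfun w
          rw [hμv] at this
          linarith
        obtain ⟨c1, c2, c3⟩ := (memB_iff G H hh).mp q.2
        have hYstep : ∀ j : Fin h,
            q.1 (Sum.inr (Sum.inr j)) + q.1 (Sum.inr (Sum.inr (j + 1))) = 0 := by
          intro j
          have hc := c2 (j + 1)
          rw [add_sub_cancel_right] at hc
          rw [hinlzero _] at hc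
          linarith
        have hYalt : ∀ j : Fin h, q.1 (Sum.inr (Sum.inr j))
            = (-1 : ℝ) ^ ((j : ℕ)) * q.1 (Sum.inr (Sum.inr (0 : Fin h))) :=
          fun j => alt_of_step (f := fun j => q.1 (Sum.inr (Sum.inr j))) hYstep j
        have hμvY : μL q.1 = -q.1 (Sum.inr (Sum.inr (0 : Fin h))) := by
          rw [hμL]
          have e2 : ∀ j : Fin h, (-1 : ℝ) ^ ((j : ℕ) + 1) * q.1 (Sum.inr (Sum.inr j))
              = -q.1 (Sum.inr (Sum.inr (0 : Fin h))) := by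
            intro j
            rw [hYalt j, pow_succ]
            linear_combination (-(q.1 (Sum.inr (Sum.inr (0 : Fin h))))) * eps_sq j
          rw [Finset.sum_congr rfl (fun j _ => e2 j), sum_const_fin]
          field_simp
          try ring
        have hY0 : q.1 (Sum.inr (Sum.inr (0 : Fin h))) = 0 := by
          rw [hμv] at hμvY
          linarith
        apply Subtype.ext
        funext v
        show q.1 v = 0
        rcases v with w | i | j
        · exact hinlzero w
        · exact xprime_zero G H hh q.2 i
        · rw [hYalt j, hY0, mul_zero]
      · intro r
        set a : ℝ := (h : ℝ)⁻¹ * ∑ j : Fin h, (-1 : ℝ) ^ ((j : ℕ)) * r.1 (Sum.inr (Sum.inr j))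
          with ha
        set r' : (V ⊕ (Fin h ⊕ Fin h)) → ℝ := r.1 + a • specialVector V h with hr'def
        have hr'mem : r' ∈ kerSub (altan G H) :=
          Submodule.add_mem _ r.2 (Submodule.smul_mem _ _ hs)
        have hr'y : ∀ j : Fin h, r' (Sum.inr (Sum.inr j))
            = r.1 (Sum.inr (Sum.inr j)) + a * (-1 : ℝ) ^ ((j : ℕ) + 1) := by
          intro j
          rw [hr'def]
          simp [sv_y]
        have hℓr' : ∑ j : Fin h, (-1 : ℝ) ^ ((j : ℕ)) * r' (Sum.inr (Sum.inr j)) = 0 := by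
          have e2 : ∀ j : Fin h, (-1 : ℝ) ^ ((j : ℕ)) * r' (Sum.inr (Sum.inr j))
              = (-1 : ℝ) ^ ((j : ℕ)) * r.1 (Sum.inr (Sum.inr j)) + a * (-1) := by
            intro j
            rw [hr'y j, pow_succ]
            linear_combination (-a) * eps_sq j
          rw [Finset.sum_congr rfl (fun j _ => e2 j), Finset.sum_add_distrib, sum_const_fin]
          rw [ha]
          field_simp
          try ring
        have hcond : ∑ j : Fin h, (-1 : ℝ) ^ ((j : ℕ))
            * (-(r' (Sum.inr (Sum.inr (j + 1))))) = 0 := by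
          have e3 : ∀ j : Fin h, (-1 : ℝ) ^ ((j : ℕ)) * (-(r' (Sum.inr (Sum.inr (j + 1)))))
              = (-1 : ℝ) ^ (((j + 1 : Fin h)) : ℕ) * r' (Sum.inr (Sum.inr (j + 1))) := by
            intro j
            rw [eps_succ hh he]
            ring
          rw [Finset.sum_congr rfl (fun j _ => e3 j)]
          rw [Fintype.sum_equiv (Equiv.addRight (1 : Fin h))
            (fun j => (-1 : ℝ) ^ (((j + 1 : Fin h)) : ℕ) * r' (Sum.inr (Sum.inr (j + 1))))
            (fun j => (-1 : ℝ) ^ ((j : ℕ)) * r' (Sum.inr (Sum.inr j))) (fun j => rfl)]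
          exact hℓr'
        obtain ⟨g, hg⟩ := exists_step_solution hh
          (fun j => -(r' (Sum.inr (Sum.inr (j + 1))))) (Or.inr hcond)
        have hq0mem : Sum.elim r' (Sum.elim 0 g)
            ∈ kerSub (altan (altan G H) (inducedAttachment V h)) :=
          ext_mem G H hh hr'mem hg
        have hwg : ∀ j : Fin h, (fun j : Fin h => (-1 : ℝ) ^ ((j : ℕ))) j
            + (fun j : Fin h => (-1 : ℝ) ^ ((j : ℕ))) (j + 1)
            = -((0 : (V ⊕ (Fin h ⊕ Fin h)) → ℝ) (Sum.inr (Sum.inr (j + 1)))) := by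
          intro j
          have := eps_succ hh he j
          simp only [Pi.zero_apply, neg_zero]
          linarith
        have hwmem : Sum.elim (0 : (V ⊕ (Fin h ⊕ Fin h)) → ℝ)
              (Sum.elim 0 (fun j : Fin h => (-1 : ℝ) ^ ((j : ℕ))))
            ∈ kerSub (altan (altan G H) (inducedAttachment V h)) :=
          ext_mem G H hh (Submodule.zero_mem _) hwg
        set τ : ℝ := μL (Sum.elim r' (Sum.elim 0 g)) + a with hτ
        set qfull : ((V ⊕ (Fin h ⊕ Fin h)) ⊕ (Fin h ⊕ Fin h)) → ℝ :=
          Sum.elim r' (Sum.elim 0 g) + τ • Sum.elim (0 : (V ⊕ (Fin h ⊕ Fin h)) → ℝ)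
            (Sum.elim 0 (fun j : Fin h => (-1 : ℝ) ^ ((j : ℕ)))) with hqfull
        have hqmem : qfull ∈ kerSub (altan (altan G H) (inducedAttachment V h)) :=
          Submodule.add_mem _ hq0mem (Submodule.smul_mem _ _ hwmem)
        refine ⟨⟨qfull, hqmem⟩, ?_⟩
        apply Subtype.ext
        have hres : ((Φt.restrict hmem) ⟨qfull, hqmem⟩ : (V ⊕ (Fin h ⊕ Fin h)) → ℝ)
            = Φt qfull := rfl
        rw [hres, hΦt]
        have hql : ∀ w, qfull (Sum.inl w) = r' w := by
          intro w
          rw [hqfull]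
          simp
        have hqy : ∀ j : Fin h, qfull (Sum.inr (Sum.inr j))
            = g j + τ * (-1 : ℝ) ^ ((j : ℕ)) := by
          intro j
          rw [hqfull]
          simp
        have hμq0 : μL (Sum.elim r' (Sum.elim 0 g))
            = (h : ℝ)⁻¹ * ∑ j : Fin h, (-1 : ℝ) ^ ((j : ℕ) + 1) * g j := by
          rw [hμL]
          congr 1
        have hμq : μL qfull = -a := by
          rw [hμL]
          have e4 : ∀ j : Fin h, (-1 : ℝ) ^ ((j : ℕ) + 1) * qfull (Sum.inr (Sum.inr j))
              = (-1 : ℝ) ^ ((j : ℕ) + 1) * g j + τ * (-1) := by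
            intro j
            rw [hqy j, pow_succ]
            linear_combination (-τ) * eps_sq j
          rw [Finset.sum_congr rfl (fun j _ => e4 j), Finset.sum_add_distrib, sum_const_fin]
          have hτv : τ = (h : ℝ)⁻¹ * (∑ j : Fin h, (-1 : ℝ) ^ ((j : ℕ) + 1) * g j) + a := by
            rw [hτ, hμq0]
          rw [hτv]
          field_simp
          try ring
        rw [hμq]
        funext w
        simp only [Pi.add_apply, Pi.smul_apply, smul_eq_mul]
        rw [hql w, hr'def]
        simp only [Pi.add_apply, Pi.smul_apply, smul_eq_mul]
        ring
    exact (LinearEquiv.ofBijective _ hbij).finrank_eq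
  · -- ODD CASE
    set Φt : (((V ⊕ (Fin h ⊕ Fin h)) ⊕ (Fin h ⊕ Fin h)) → ℝ) →ₗ[ℝ] ((V ⊕ (Fin h ⊕ Fin h)) → ℝ) :=
      LinearMap.funLeft ℝ ℝ (Sum.inl : (V ⊕ (Fin h ⊕ Fin h)) → (V ⊕ (Fin h ⊕ Fin h)) ⊕ (Fin h ⊕ Fin h))
      with hΦtdef
    have hmem : ∀ q ∈ kerSub (altan (altan G H) (inducedAttachment V h)),
        Φt q ∈ kerSub (altan G H) := by
      intro q hq
      exact restrict_mem G H hh hq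
    have hbij : Function.Bijective (Φt.restrict hmem) := by
      constructor
      · rw [injective_iff_map_eq_zero]
        intro q hq0
        have hval : Φt q.1 = 0 := congrArg Subtype.val hq0
        have hinlzero : ∀ w, q.1 (Sum.inl w) = 0 := fun w => congrFun hval w
        obtain ⟨c1, c2, c3⟩ := (memB_iff G H hh).mp q.2
        have hYstep : ∀ j : Fin h,
            q.1 (Sum.inr (Sum.inr j)) + q.1 (Sum.inr (Sum.inr (j + 1))) = 0 := by
          intro j
          have hc := c2 (j + 1)
          rw [add_sub_cancel_right] at hc
          rw [hinlzero _] at hc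
          linarith
        apply Subtype.ext
        funext v
        show q.1 v = 0
        rcases v with w | i | j
        · exact hinlzero w
        · exact xprime_zero G H hh q.2 i
        · exact alt_of_step_odd ho (f := fun j => q.1 (Sum.inr (Sum.inr j))) hYstep j
      · intro r
        obtain ⟨g, hg⟩ := exists_step_solution hh
          (fun j => -(r.1 (Sum.inr (Sum.inr (j + 1))))) (Or.inl ho)
        have hqmem : Sum.elim r.1 (Sum.elim 0 g)
            ∈ kerSub (altan (altan G H) (inducedAttachment V h)) :=
          ext_mem G H hh r.2 hg
        refine ⟨⟨Sum.elim r.1 (Sum.elim 0 g), hqmem⟩, ?_⟩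
        apply Subtype.ext
        funext w
        rfl
    exact (LinearEquiv.ofBijective _ hbij).finrank_eq

end Main


end AltanAux

lemma step_nullity (P : AltanPair) :
    (altanStep (altanStep P)).nullity = (altanStep P).nullity := by
  haveI : NeZero P.h := ⟨by have := P.h2; omega⟩
  exact AltanAux.key P.G P.H P.h2

/-- all iterated altans (n ≥ 1) have the same nullity as the first altan. -/
theorem stmt13 (P : AltanPair) (n : ℕ) (hn : 1 ≤ n) :
    (altanStep^[n] P).nullity = (altanStep P).nullity := by
  have main : ∀ (m : ℕ) (Q : AltanPair),
      (altanStep^[m] (altanStep Q)).nullity = (altanStep Q).nullity := by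
    intro m
    induction m with
    | zero => intro Q; rfl
    | succ k ih =>
      intro Q
      rw [Function.iterate_succ_apply]
      exact (ih (altanStep Q)).trans (step_nullity Q)
  obtain ⟨m, rfl⟩ : ∃ m, n = m + 1 := ⟨n - 1, by omega⟩
  rw [Function.iterate_succ_apply]
  exact main m P
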